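/- Let n be a positive integer, let r, κ ∈ ℝⁿ have nonnegative entries, let E ∈ ℝ^{n×n}, and define the profit P(π) = Σ_{i=1}^n (r_i·exp((Eπ)_i + π_i) − κ_i·exp((Eπ)_i)). Fix π̂ ∈ ℝⁿ and δ^max ∈ ℝⁿ such that, writing δ̂ = Eπ̂ and b_i = δ^max_i − δ̂_i, we have b_i > 0 for all i; set β_i = (exp(b_i) − b_i − 1)/b_i². Define the QMM surrogate Q(π) = Σ_{i=1}^n (r_i·exp(δ̂_i + π̂_i)·(1 + (Eπ)_i + π_i − δ̂_i − π̂_i) − κ_i·exp(δ̂_i)·(1 + ((Eπ)_i − δ̂_i) + β_i·((Eπ)_i − δ̂_i)²)). Then Q(π) ≤ P(π) for every π ∈ ℝⁿ with Eπ ≤ δ^max componentwise, and Q(π̂) = P(π̂). -/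

import Mathlib

/-- Integral representation of `(exp t - t - 1)/t²`. -/
lemma qmm_intrep (t : ℝ) (ht : t ≠ 0) :
    ∫ s in (0:ℝ)..1, (1 - s) * Real.exp (s * t)
      = (Real.exp t - t - 1) / t ^ 2 := by
  have h : ∀ s ∈ Set.uIcc (0:ℝ) 1,
      HasDerivAt (fun s : ℝ => (1 - s) * Real.exp (s * t) / t + Real.exp (s * t) / t ^ 2)
        ((1 - s) * Real.exp (s * t)) s := by
    intro s _
    have he : HasDerivAt (fun s : ℝ => Real.exp (s * t)) (t * Real.exp (s * t)) s := by
      simpa [mul_comm, Function.comp_def] using (Real.hasDerivAt_exp (s * t)).comp s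
        ((hasDerivAt_id s).mul_const t)
    have h1 : HasDerivAt (fun s : ℝ => (1 - s) * Real.exp (s * t) / t)
        (((-1) * Real.exp (s * t) + (1 - s) * (t * Real.exp (s * t))) / t) s := by
      simpa using (((hasDerivAt_const s (1:ℝ)).sub (hasDerivAt_id s)).mul he).div_const t
    have h2 : HasDerivAt (fun s : ℝ => Real.exp (s * t) / t ^ 2)
        ((t * Real.exp (s * t)) / t ^ 2) s := he.div_const _
    have := h1.add h2
    refine this.congr_deriv ?_
    field_simp
    ring
  have hc : IntervalIntegrable (fun s : ℝ => (1 - s) * Real.exp (s * t))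
      MeasureTheory.volume 0 1 := by
    apply Continuous.intervalIntegrable
    continuity
  have := intervalIntegral.integral_eq_sub_of_hasDerivAt h hc
  rw [this]
  field_simp
  rw [mul_zero, Real.exp_zero]
  ring

/-- Key inequality: for `t ≤ b`, `0 < b`,
`exp t ≤ 1 + t + ((exp b - b - 1)/b²) t²`. -/
lemma qmm_key (b t : ℝ) (hb : 0 < b) (ht : t ≤ b) :
    Real.exp t ≤ 1 + t + (Real.exp b - b - 1) / b ^ 2 * t ^ 2 := by
  rcases eq_or_ne t 0 with rfl | ht0
  · simp
  have hbne : b ≠ 0 := ne_of_gt hb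
  have hmono : (∫ s in (0:ℝ)..1, (1 - s) * Real.exp (s * t))
      ≤ ∫ s in (0:ℝ)..1, (1 - s) * Real.exp (s * b) := by
    apply intervalIntegral.integral_mono_on (by norm_num)
    · apply Continuous.intervalIntegrable; continuity
    · apply Continuous.intervalIntegrable; continuity
    · intro s hs
      have h1 : 0 ≤ 1 - s := by linarith [hs.2]
      have : Real.exp (s * t) ≤ Real.exp (s * b) :=
        Real.exp_le_exp.2 (by nlinarith [hs.1, hs.2])
      nlinarith
  rw [qmm_intrep t ht0, qmm_intrep b hbne] at hmono
  have ht2 : (0:ℝ) < t ^ 2 := by positivity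
  have := (div_le_div_iff₀ ht2 (by positivity : (0:ℝ) < b ^ 2)).1
    (by simpa [div_le_div_iff₀] using hmono)
  have h' : (Real.exp t - t - 1) ≤ (Real.exp b - b - 1) / b ^ 2 * t ^ 2 := by
    have := mul_le_mul_of_nonneg_right hmono (le_of_lt ht2)
    calc Real.exp t - t - 1 = (Real.exp t - t - 1) / t ^ 2 * t ^ 2 := by
          field_simp
      _ ≤ (Real.exp b - b - 1) / b ^ 2 * t ^ 2 := this
  linarith

/-- The QMM surrogate (linearized revenue terms and quadratic minorizers of the
concave cost terms) minorizes the profit on `{π : Eπ ≤ δmax}` and is tight at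
the current iterate `π̂`. -/
theorem qmm_surrogate_minorizes
    (n : ℕ) (hn : 0 < n) (r κ : Fin n → ℝ)
    (hr : ∀ i, 0 ≤ r i) (hκ : ∀ i, 0 ≤ κ i)
    (E : Matrix (Fin n) (Fin n) ℝ)
    (P : (Fin n → ℝ) → ℝ)
    (hP : ∀ π : Fin n → ℝ,
      P π = ∑ i, (r i * Real.exp (E.mulVec π i + π i)
                    - κ i * Real.exp (E.mulVec π i)))
    (πhat δmax : Fin n → ℝ)
    (b : Fin n → ℝ) (hb : ∀ i, b i = δmax i - E.mulVec πhat i)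
    (hbpos : ∀ i, 0 < b i)
    (β : Fin n → ℝ) (hβ : ∀ i, β i = (Real.exp (b i) - b i - 1) / (b i) ^ 2)
    (Q : (Fin n → ℝ) → ℝ)
    (hQ : ∀ π : Fin n → ℝ,
      Q π = ∑ i, (r i * Real.exp (E.mulVec πhat i + πhat i) *
                    (1 + E.mulVec π i + π i - E.mulVec πhat i - πhat i)
                  - κ i * Real.exp (E.mulVec πhat i) *
                    (1 + (E.mulVec π i - E.mulVec πhat i)
                       + β i * (E.mulVec π i - E.mulVec πhat i) ^ 2))) :
    (∀ π : Fin n → ℝ, (∀ i, E.mulVec π i ≤ δmax i) → Q π ≤ P π) ∧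
      Q πhat = P πhat := by
  constructor
  · intro π hπ
    rw [hP, hQ]
    apply Finset.sum_le_sum
    intro i _
    set x := E.mulVec π i + π i
    set xh := E.mulVec πhat i + πhat i
    set δ := E.mulVec π i
    set δh := E.mulVec πhat i
    have hrev : r i * Real.exp xh * (1 + x - xh) ≤ r i * Real.exp x := by
      have h1 : 1 + (x - xh) ≤ Real.exp (x - xh) := by
        have := Real.add_one_le_exp (x - xh); linarith
      have h2 : Real.exp xh * (1 + x - xh) ≤ Real.exp xh * Real.exp (x - xh) := by
        have := mul_le_mul_of_nonneg_left (by linarith : 1 + x - xh ≤ Real.exp (x - xh))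
          (le_of_lt (Real.exp_pos xh))
        linarith
      rw [← Real.exp_add] at h2
      have : Real.exp xh * (1 + x - xh) ≤ Real.exp x := by
        simpa [add_sub_cancel] using h2
      calc r i * Real.exp xh * (1 + x - xh)
          = r i * (Real.exp xh * (1 + x - xh)) := by ring
        _ ≤ r i * Real.exp x := mul_le_mul_of_nonneg_left this (hr i)
    have hcost : κ i * Real.exp δ ≤
        κ i * Real.exp δh * (1 + (δ - δh) + β i * (δ - δh) ^ 2) := by
      set t := δ - δh with htdef
      have htb : t ≤ b i := by
        have := hπ i
        rw [hb i]
        simp only [htdef]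
        linarith
      have hk := qmm_key (b i) t (hbpos i) htb
      rw [hβ i] at *
      have h2 : Real.exp δh * Real.exp t ≤
          Real.exp δh * (1 + t + (Real.exp (b i) - b i - 1) / (b i) ^ 2 * t ^ 2) :=
        mul_le_mul_of_nonneg_left hk (le_of_lt (Real.exp_pos δh))
      rw [← Real.exp_add] at h2
      have hδ : δh + t = δ := by simp [htdef]
      rw [hδ] at h2
      calc κ i * Real.exp δ
          ≤ κ i * (Real.exp δh * (1 + t + (Real.exp (b i) - b i - 1) / (b i) ^ 2 * t ^ 2)) :=
            mul_le_mul_of_nonneg_left h2 (hκ i)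
        _ = κ i * Real.exp δh * (1 + t + (Real.exp (b i) - b i - 1) / (b i) ^ 2 * t ^ 2) := by
            ring
    have : 1 + x - xh = 1 + δ + π i - δh - πhat i := by simp [x, xh]; ring
    rw [this] at hrev
    linarith
  · rw [hP, hQ]
    apply Finset.sum_congr rfl
    intro i _
    simp
    ring
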